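/- arXiv:2007.07065 — 2 statements merged into one kernel-verified Lean document; each statement's English description precedes it below -/
import Mathlib

section
/- Suppose the density of W for w > w₀ equals f(w) = (ξσ)^{-1}(w/σ)^{-1/ξ-1}(1 + h(w)) with |h(w)| ≤ C w^{-δ/ξ} for some δ > 0 and 0 < ξ < 1/2. With m(w) = E[W 1[W>w]]/F(w) and m*(w) = σ^{1/ξ} w^{1-1/ξ}/(1-ξ), there is a constant C' such that |m(w) - m*(w)| ≤ C'(w^{1-(1+δ)/ξ} + w^{1-2/ξ}) uniformly in w > w₀. -/
open MeasureTheory Filter Set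

set_option maxHeartbeats 2000000 in
/-- Suppose the density of `W` for `w > w₀` equals
`f w = (ξσ)⁻¹ (w/σ)^(-1/ξ-1) (1 + h w)` with `|h w| ≤ C w^(-δ/ξ)` for some `δ > 0`
and `0 < ξ < 1/2`.  With `m(w) = E[W 1[W>w]]/F(w)` and
`m*(w) = σ^(1/ξ) w^(1-1/ξ)/(1-ξ)`, there is a constant `C'` such that
`|m(w) - m*(w)| ≤ C' (w^(1-(1+δ)/ξ) + w^(1-2/ξ))` uniformly in `w > w₀`. -/
theorem truncated_mean_pareto_approximation
    {Ω : Type*} [MeasurableSpace Ω] (μ : Measure Ω) [IsProbabilityMeasure μ]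
    (W : Ω → ℝ) (hW : Measurable W) (hWint : Integrable W μ)
    (ξ σ δ w₀ C : ℝ) (hξ0 : 0 < ξ) (hξ2 : ξ < 1/2) (hσ : 0 < σ) (hδ : 0 < δ)
    (hC : 0 < C) (hw₀ : 0 < w₀)
    (h f : ℝ → ℝ)
    (hfform : ∀ w > w₀, f w = (ξ * σ)⁻¹ * (w / σ) ^ (-1/ξ - 1) * (1 + h w))
    (hhbd : ∀ w > w₀, |h w| ≤ C * w ^ (-δ/ξ))
    (hf0 : ∀ w, 0 ≤ f w)
    (hdens : (μ.map W).restrict (Ioi w₀)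
      = (volume.restrict (Ioi w₀)).withDensity (fun w => ENNReal.ofReal (f w)))
    (F : ℝ → ℝ) (hF : ∀ w, F w = (μ {ω | W ω ≤ w}).toReal) (hF0 : 0 < F w₀)
    (m mstar : ℝ → ℝ)
    (hm : ∀ w, m w = (∫ ω in {ω | w < W ω}, W ω ∂μ) / F w)
    (hmstar : ∀ w, mstar w = σ ^ (1/ξ) * w ^ (1 - 1/ξ) / (1 - ξ)) :
    ∃ C' : ℝ, 0 < C' ∧ ∀ w > w₀,
      |m w - mstar w| ≤ C' * (w ^ (1 - (1+δ)/ξ) + w ^ (1 - 2/ξ)) := by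
  have hξ1 : ξ < 1 := by linarith
  have hξinv : 2 < 1/ξ := by rw [lt_div_iff₀ hξ0]; linarith
  have hδξ : 0 < δ/ξ := div_pos hδ hξ0
  have hsplit : (1+δ)/ξ = 1/ξ + δ/ξ := by ring
  have hden1 : 0 < (1+δ)/ξ - 1 := by linarith
  set K := σ ^ (1/ξ) / ξ with hK
  have hKpos : 0 < K := div_pos (Real.rpow_pos_of_pos hσ _) hξ0
  set c₁ := K * C / ((1+δ)/ξ - 1) with hc₁
  have hc₁pos : 0 < c₁ := div_pos (mul_pos hKpos hC) hden1
  set c₂ := σ ^ (1/ξ) + (σ ^ (1/ξ) * C / (1+δ)) * w₀ ^ (-δ/ξ) with hc₂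
  have hc₂pos : 0 < c₂ := by positivity
  set c₃ := σ ^ (1/ξ) * c₂ / (1-ξ) with hc₃
  have hc₃pos : 0 < c₃ :=
    div_pos (mul_pos (Real.rpow_pos_of_pos hσ _) hc₂pos) (by linarith)
  set L : ℝ → ℝ := fun s => (ξ*σ)⁻¹ * (s/σ) ^ (-1/ξ-1) * (1 - C * s ^ (-δ/ξ)) with hLdef
  set U : ℝ → ℝ := fun s => (ξ*σ)⁻¹ * (s/σ) ^ (-1/ξ-1) * (1 + C * s ^ (-δ/ξ)) with hUdef
  have hUm : Measurable U := by rw [hUdef]; fun_prop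
  -- the basic pointwise identity
  have hkey : ∀ s : ℝ, w₀ < s → (ξ*σ)⁻¹ * (s/σ) ^ (-1/ξ-1) = K * s ^ (-1/ξ-1) := by
    intro s hs
    have hs0 : 0 < s := hw₀.trans hs
    rw [Real.div_rpow hs0.le hσ.le,
      show (-1/ξ - 1 : ℝ) = -(1/ξ + 1) by ring,
      Real.rpow_neg hσ.le, Real.rpow_add hσ, Real.rpow_one, hK]
    have h1 : σ ^ (1/ξ) ≠ 0 := (Real.rpow_pos_of_pos hσ _).ne'
    field_simp
  have hkpos : ∀ s : ℝ, w₀ < s → 0 < (ξ*σ)⁻¹ * (s/σ) ^ (-1/ξ-1) := by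
    intro s hs
    have hs0 : 0 < s := hw₀.trans hs
    have := Real.rpow_pos_of_pos (div_pos hs0 hσ) (-1/ξ-1)
    positivity
  have hLf : ∀ s : ℝ, w₀ < s → L s ≤ f s := by
    intro s hs
    have hb := (abs_le.mp (hhbd s hs)).1
    rw [hfform s hs, hLdef]
    have := hkpos s hs
    nlinarith
  have hfU : ∀ s : ℝ, w₀ < s → f s ≤ U s := by
    intro s hs
    have hb := (abs_le.mp (hhbd s hs)).2
    rw [hfform s hs, hUdef]
    have := hkpos s hs
    nlinarith
  have hU0 : ∀ s : ℝ, w₀ < s → 0 ≤ U s := fun s hs => le_trans (hf0 s) (hfU s hs)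
  -- pointwise formulas
  have hUs : ∀ s : ℝ, w₀ < s → U s * s = K * s ^ (-1/ξ) + K*C * s ^ (-(1+δ)/ξ) := by
    intro s hs
    have hs0 : 0 < s := hw₀.trans hs
    have h1 : s ^ (-1/ξ-1) * s = s ^ (-1/ξ) := by
      nth_rewrite 2 [← Real.rpow_one s]
      rw [← Real.rpow_add hs0]; congr 1; ring
    have h2 : s ^ (-1/ξ) * s ^ (-δ/ξ) = s ^ (-(1+δ)/ξ) := by
      rw [← Real.rpow_add hs0]; congr 1; ring
    rw [hUdef]
    simp only
    rw [hkey s hs,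
      show K * s ^ (-1/ξ-1) * (1 + C * s ^ (-δ/ξ)) * s
        = K * (s ^ (-1/ξ-1) * s) + K*C * ((s ^ (-1/ξ-1) * s) * s ^ (-δ/ξ)) by ring,
      h1, h2]
  have hLs : ∀ s : ℝ, w₀ < s → L s * s = K * s ^ (-1/ξ) - K*C * s ^ (-(1+δ)/ξ) := by
    intro s hs
    have hs0 : 0 < s := hw₀.trans hs
    have h1 : s ^ (-1/ξ-1) * s = s ^ (-1/ξ) := by
      nth_rewrite 2 [← Real.rpow_one s]
      rw [← Real.rpow_add hs0]; congr 1; ring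
    have h2 : s ^ (-1/ξ) * s ^ (-δ/ξ) = s ^ (-(1+δ)/ξ) := by
      rw [← Real.rpow_add hs0]; congr 1; ring
    rw [hLdef]
    simp only
    rw [hkey s hs,
      show K * s ^ (-1/ξ-1) * (1 - C * s ^ (-δ/ξ)) * s
        = K * (s ^ (-1/ξ-1) * s) - K*C * ((s ^ (-1/ξ-1) * s) * s ^ (-δ/ξ)) by ring,
      h1, h2]
  have hUe : ∀ s : ℝ, w₀ < s → U s = K * s ^ (-1/ξ-1) + K*C * s ^ (-(1+δ)/ξ-1) := by
    intro s hs
    have hs0 : 0 < s := hw₀.trans hs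
    have h2 : s ^ (-1/ξ-1) * s ^ (-δ/ξ) = s ^ (-(1+δ)/ξ-1) := by
      rw [← Real.rpow_add hs0]; congr 1; ring
    rw [hUdef]
    simp only
    rw [hkey s hs,
      show K * s ^ (-1/ξ-1) * (1 + C * s ^ (-δ/ξ))
        = K * s ^ (-1/ξ-1) + K*C * (s ^ (-1/ξ-1) * s ^ (-δ/ξ)) by ring, h2]
  -- measure-theoretic setup
  set ν := μ.map W with hνdef
  have hid_int : Integrable (fun s : ℝ => s) ν := by
    rw [hνdef]
    exact (integrable_map_measure aestronglyMeasurable_id hW.aemeasurable).mpr hWint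
  have hνL : (volume.restrict (Ioi w₀)).withDensity (fun s => ENNReal.ofReal (L s))
      ≤ ν.restrict (Ioi w₀) := by
    rw [hdens, Measure.le_iff]
    intro s hs
    rw [withDensity_apply _ hs, withDensity_apply _ hs,
      Measure.restrict_restrict hs]
    refine lintegral_mono_ae ((ae_restrict_iff' (hs.inter measurableSet_Ioi)).mpr
      (ae_of_all _ fun a ha => ?_))
    exact ENNReal.ofReal_le_ofReal (hLf a ha.2)
  have hνU : ν.restrict (Ioi w₀)
      ≤ (volume.restrict (Ioi w₀)).withDensity (fun s => ENNReal.ofReal (U s)) := by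
    rw [hdens, Measure.le_iff]
    intro s hs
    rw [withDensity_apply _ hs, withDensity_apply _ hs,
      Measure.restrict_restrict hs]
    refine lintegral_mono_ae ((ae_restrict_iff' (hs.inter measurableSet_Ioi)).mpr
      (ae_of_all _ fun a ha => ?_))
    exact ENNReal.ofReal_le_ofReal (hfU a ha.2)
  refine ⟨(c₁ + c₃) / F w₀, div_pos (by linarith) hF0, ?_⟩
  intro w hw
  have hw0 : 0 < w := hw₀.trans hw
  have hIoisub : Ioi w ⊆ Ioi w₀ := Ioi_subset_Ioi hw.le
  have hp₀ : -1/ξ < -1 := by rw [neg_div]; linarith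
  have hp₁ : -(1+δ)/ξ < -1 := by rw [neg_div]; linarith
  have hp₂ : -1/ξ - 1 < -1 := by rw [neg_div]; linarith
  have hp₃ : -(1+δ)/ξ - 1 < -1 := by rw [neg_div]; linarith
  have int₀ := integrableOn_Ioi_rpow_of_lt hp₀ hw0
  have int₁ := integrableOn_Ioi_rpow_of_lt hp₁ hw0
  have int₂ := integrableOn_Ioi_rpow_of_lt hp₂ hw0
  have int₃ := integrableOn_Ioi_rpow_of_lt hp₃ hw0
  have he₁ : (0:ℝ) < w ^ (1 - (1+δ)/ξ) := Real.rpow_pos_of_pos hw0 _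
  have he₂ : (0:ℝ) < w ^ (1 - 2/ξ) := Real.rpow_pos_of_pos hw0 _
  have hUseq : EqOn (fun s => U s * s)
      (fun s => K * s ^ (-1/ξ) + K*C * s ^ (-(1+δ)/ξ)) (Ioi w) :=
    fun s hs => hUs s (hIoisub hs)
  have hLseq : EqOn (fun s => L s * s)
      (fun s => K * s ^ (-1/ξ) - K*C * s ^ (-(1+δ)/ξ)) (Ioi w) :=
    fun s hs => hLs s (hIoisub hs)
  have hUeeq : EqOn U
      (fun s => K * s ^ (-1/ξ-1) + K*C * s ^ (-(1+δ)/ξ-1)) (Ioi w) :=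
    fun s hs => hUe s (hIoisub hs)
  have intU : IntegrableOn (fun s => U s * s) (Ioi w) :=
    (integrableOn_congr_fun hUseq measurableSet_Ioi).mpr
      ((int₀.const_mul K).add (int₁.const_mul (K*C)))
  have intL : IntegrableOn (fun s => L s * s) (Ioi w) :=
    (integrableOn_congr_fun hLseq measurableSet_Ioi).mpr
      ((int₀.const_mul K).sub (int₁.const_mul (K*C)))
  have intUe : IntegrableOn U (Ioi w) :=
    (integrableOn_congr_fun hUeeq measurableSet_Ioi).mpr
      ((int₂.const_mul K).add (int₃.const_mul (K*C)))
  -- integral values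
  have hne1 : (1:ℝ) - 1/ξ ≠ 0 := ne_of_lt (by linarith)
  have hne2 : (1:ℝ) - (1+δ)/ξ ≠ 0 := ne_of_lt (by linarith)
  have hne3 : (1:ℝ) - ξ ≠ 0 := ne_of_gt (by linarith)
  have hne4 : ((1+δ)/ξ - 1 : ℝ) ≠ 0 := ne_of_gt hden1
  have hIUval : ∫ s in Ioi w, U s * s = mstar w + c₁ * w ^ (1 - (1+δ)/ξ) := by
    rw [setIntegral_congr_fun measurableSet_Ioi hUseq,
      integral_add (int₀.const_mul K) (int₁.const_mul (K*C)),
      integral_const_mul, integral_const_mul,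
      integral_Ioi_rpow_of_lt hp₀ hw0, integral_Ioi_rpow_of_lt hp₁ hw0,
      hmstar w, show (-1/ξ + 1 : ℝ) = 1 - 1/ξ by ring,
      show (-(1+δ)/ξ + 1 : ℝ) = 1 - (1+δ)/ξ by ring, hc₁]
    have hxx : ξ * (1/ξ) = 1 := mul_one_div_cancel hξ0.ne'
    have k1 : K * (-1 / (1 - 1/ξ)) = σ ^ (1/ξ) / (1 - ξ) := by
      rw [hK, div_mul_div_comm, div_eq_div_iff (mul_ne_zero hξ0.ne' hne1) hne3]
      linear_combination (σ ^ (1/ξ)) * hxx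
    have k2 : (-1 : ℝ) / (1 - (1+δ)/ξ) = 1 / ((1+δ)/ξ - 1) := by
      rw [div_eq_div_iff hne2 hne4]; ring
    linear_combination (w ^ (1 - 1/ξ)) * k1 + (K * C * w ^ (1 - (1+δ)/ξ)) * k2
  have hILval : ∫ s in Ioi w, L s * s = mstar w - c₁ * w ^ (1 - (1+δ)/ξ) := by
    rw [setIntegral_congr_fun measurableSet_Ioi hLseq,
      integral_sub (int₀.const_mul K) (int₁.const_mul (K*C)),
      integral_const_mul, integral_const_mul,
      integral_Ioi_rpow_of_lt hp₀ hw0, integral_Ioi_rpow_of_lt hp₁ hw0,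
      hmstar w, show (-1/ξ + 1 : ℝ) = 1 - 1/ξ by ring,
      show (-(1+δ)/ξ + 1 : ℝ) = 1 - (1+δ)/ξ by ring, hc₁]
    have hxx : ξ * (1/ξ) = 1 := mul_one_div_cancel hξ0.ne'
    have k1 : K * (-1 / (1 - 1/ξ)) = σ ^ (1/ξ) / (1 - ξ) := by
      rw [hK, div_mul_div_comm, div_eq_div_iff (mul_ne_zero hξ0.ne' hne1) hne3]
      linear_combination (σ ^ (1/ξ)) * hxx
    have k2 : (-1 : ℝ) / (1 - (1+δ)/ξ) = 1 / ((1+δ)/ξ - 1) := by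
      rw [div_eq_div_iff hne2 hne4]; ring
    linear_combination (w ^ (1 - 1/ξ)) * k1 - (K * C * w ^ (1 - (1+δ)/ξ)) * k2
  have hne5 : (-1/ξ : ℝ) ≠ 0 := ne_of_lt (by linarith)
  have hne6 : (-(1+δ)/ξ : ℝ) ≠ 0 := ne_of_lt (by linarith)
  have hTval : ∫ s in Ioi w, U s
      = σ ^ (1/ξ) * w ^ (-1/ξ) + (σ ^ (1/ξ) * C / (1+δ)) * w ^ (-(1+δ)/ξ) := by
    rw [setIntegral_congr_fun measurableSet_Ioi hUeeq,
      integral_add (int₂.const_mul K) (int₃.const_mul (K*C)),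
      integral_const_mul, integral_const_mul,
      integral_Ioi_rpow_of_lt hp₂ hw0, integral_Ioi_rpow_of_lt hp₃ hw0,
      show (-1/ξ - 1 + 1 : ℝ) = -1/ξ by ring,
      show (-(1+δ)/ξ - 1 + 1 : ℝ) = -(1+δ)/ξ by ring]
    have hxx : ξ * (1/ξ) = 1 := mul_one_div_cancel hξ0.ne'
    have k3 : K * (-1 / (-1/ξ)) = σ ^ (1/ξ) := by
      rw [hK, div_mul_div_comm, div_eq_iff (mul_ne_zero hξ0.ne' hne5)]
      linear_combination (σ ^ (1/ξ)) * hxx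
    have k4 : K * (-1 / (-(1+δ)/ξ)) = σ ^ (1/ξ) / (1+δ) := by
      rw [hK, div_mul_div_comm,
        div_eq_div_iff (mul_ne_zero hξ0.ne' hne6) (by linarith : (1+δ:ℝ) ≠ 0)]
      linear_combination (σ ^ (1/ξ) * (1+δ)) * hxx
    linear_combination (w ^ (-1/ξ)) * k3 + (C * w ^ (-(1+δ)/ξ)) * k4
  have hmspos : 0 < mstar w := by
    rw [hmstar w]
    exact div_pos (mul_pos (Real.rpow_pos_of_pos hσ _) (Real.rpow_pos_of_pos hw0 _))
      (by linarith)
  -- the truncated first moment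
  set I := ∫ s in Ioi w, s ∂ν with hIdef
  have hm_eq : ∫ ω in {ω | w < W ω}, W ω ∂μ = I := by
    have hsm := setIntegral_map (μ := μ) (g := W) (f := fun x : ℝ => x)
      (s := Ioi w) measurableSet_Ioi aestronglyMeasurable_id hW.aemeasurable
    rw [hIdef, hνdef, hsm]
    rfl
  have hInn : 0 ≤ᵐ[ν.restrict (Ioi w)] fun s : ℝ => s :=
    (ae_restrict_iff' measurableSet_Ioi).mpr (ae_of_all _ fun s hs => (hw0.trans hs).le)
  have hId : ENNReal.ofReal I = ∫⁻ s in Ioi w, ENNReal.ofReal s ∂ν :=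
    ofReal_integral_eq_lintegral_ofReal hid_int.restrict hInn
  have hInonneg : 0 ≤ I := integral_nonneg_of_ae hInn
  have hres : ν.restrict (Ioi w) = (ν.restrict (Ioi w₀)).restrict (Ioi w) := by
    rw [Measure.restrict_restrict measurableSet_Ioi, Ioi_inter_Ioi,
      sup_eq_left.mpr hw.le]
  have hwdU : (((volume.restrict (Ioi w₀)).withDensity
        (fun s => ENNReal.ofReal (U s))).restrict (Ioi w))
      = (volume.restrict (Ioi w)).withDensity (fun s => ENNReal.ofReal (U s)) := by
    rw [restrict_withDensity measurableSet_Ioi, Measure.restrict_restrict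
      measurableSet_Ioi, Ioi_inter_Ioi, sup_eq_left.mpr hw.le]
  have hwdL : (((volume.restrict (Ioi w₀)).withDensity
        (fun s => ENNReal.ofReal (L s))).restrict (Ioi w))
      = (volume.restrict (Ioi w)).withDensity (fun s => ENNReal.ofReal (L s)) := by
    rw [restrict_withDensity measurableSet_Ioi, Measure.restrict_restrict
      measurableSet_Ioi, Ioi_inter_Ioi, sup_eq_left.mpr hw.le]
  have hLm : Measurable L := by rw [hLdef]; fun_prop
  -- upper bound on I
  have hIup : I ≤ mstar w + c₁ * w ^ (1 - (1+δ)/ξ) := by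
    have step : ∫⁻ s in Ioi w, ENNReal.ofReal s ∂ν
        ≤ ENNReal.ofReal (∫ s in Ioi w, U s * s) := by
      calc ∫⁻ s in Ioi w, ENNReal.ofReal s ∂ν
          = ∫⁻ s, ENNReal.ofReal s ∂((ν.restrict (Ioi w₀)).restrict (Ioi w)) := by
            rw [← hres]
        _ ≤ ∫⁻ s, ENNReal.ofReal s ∂(((volume.restrict (Ioi w₀)).withDensity
              (fun s => ENNReal.ofReal (U s))).restrict (Ioi w)) :=
            lintegral_mono' (Measure.restrict_mono subset_rfl hνU) le_rfl
        _ = ∫⁻ s in Ioi w, ENNReal.ofReal (U s) * ENNReal.ofReal s ∂volume := by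
            rw [hwdU, lintegral_withDensity_eq_lintegral_mul _ hUm.ennreal_ofReal
              ENNReal.measurable_ofReal]
            rfl
        _ = ∫⁻ s in Ioi w, ENNReal.ofReal (U s * s) ∂volume := by
            refine setLIntegral_congr_fun measurableSet_Ioi (fun s hs => ?_)
            exact (ENNReal.ofReal_mul' (hw0.trans hs).le).symm
        _ = ENNReal.ofReal (∫ s in Ioi w, U s * s) := by
            refine (ofReal_integral_eq_lintegral_ofReal intU ?_).symm
            exact (ae_restrict_iff' measurableSet_Ioi).mpr (ae_of_all _ fun s hs =>
              mul_nonneg (hU0 s (hIoisub hs)) (hw0.trans hs).le)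
    have := (ENNReal.ofReal_le_ofReal_iff (by rw [hIUval]; positivity)).mp
      (hId ▸ step)
    linarith [this, hIUval.ge, hIUval.le]
  -- lower bound on I
  have hIlo : mstar w - c₁ * w ^ (1 - (1+δ)/ξ) ≤ I := by
    have step : ENNReal.ofReal (∫ s in Ioi w, max (L s * s) 0)
        ≤ ∫⁻ s in Ioi w, ENNReal.ofReal s ∂ν := by
      calc ENNReal.ofReal (∫ s in Ioi w, max (L s * s) 0)
          = ∫⁻ s in Ioi w, ENNReal.ofReal (max (L s * s) 0) ∂volume :=
            ofReal_integral_eq_lintegral_ofReal intL.pos_part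
              (ae_of_all _ fun s => le_max_right _ _)
        _ = ∫⁻ s in Ioi w, ENNReal.ofReal (L s * s) ∂volume := by
            refine setLIntegral_congr_fun measurableSet_Ioi (fun s _ => ?_)
            rcases le_total (L s * s) 0 with h' | h'
            · rw [max_eq_right h', ENNReal.ofReal_of_nonpos h']
              exact ENNReal.ofReal_zero
            · rw [max_eq_left h']
        _ = ∫⁻ s in Ioi w, ENNReal.ofReal (L s) * ENNReal.ofReal s ∂volume := by
            refine setLIntegral_congr_fun measurableSet_Ioi (fun s hs => ?_)
            exact ENNReal.ofReal_mul' (hw0.trans hs).le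
        _ = ∫⁻ s, ENNReal.ofReal s ∂(((volume.restrict (Ioi w₀)).withDensity
              (fun s => ENNReal.ofReal (L s))).restrict (Ioi w)) := by
            rw [hwdL, lintegral_withDensity_eq_lintegral_mul _ hLm.ennreal_ofReal
              ENNReal.measurable_ofReal]
            rfl
        _ ≤ ∫⁻ s, ENNReal.ofReal s ∂((ν.restrict (Ioi w₀)).restrict (Ioi w)) :=
            lintegral_mono' (Measure.restrict_mono subset_rfl hνL) le_rfl
        _ = ∫⁻ s in Ioi w, ENNReal.ofReal s ∂ν := by rw [← hres]
    have h3 : ∫ s in Ioi w, max (L s * s) 0 ≤ I :=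
      (ENNReal.ofReal_le_ofReal_iff hInonneg).mp (hId ▸ step)
    have h2 : ∫ s in Ioi w, L s * s ≤ ∫ s in Ioi w, max (L s * s) 0 :=
      integral_mono intL intL.pos_part (fun s => le_max_left _ _)
    linarith [hILval.le, hILval.ge]
  have habs : |I - mstar w| ≤ c₁ * w ^ (1 - (1+δ)/ξ) :=
    abs_le.mpr ⟨by linarith, by linarith⟩
  -- tail bound
  have hsetm : MeasurableSet {ω | W ω ≤ w} := measurableSet_le hW measurable_const
  have hcompl : {ω | W ω ≤ w}ᶜ = {ω | w < W ω} := by ext ω; simp [not_le]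
  have hsum : μ {ω | W ω ≤ w} + μ {ω | w < W ω} = 1 := by
    have := measure_add_measure_compl (μ := μ) hsetm
    rwa [hcompl, measure_univ] at this
  have hmap : μ {ω | w < W ω} = ν (Ioi w) := by
    rw [hνdef, Measure.map_apply hW measurableSet_Ioi]
    rfl
  have htail_le : ν (Ioi w) ≤ ENNReal.ofReal (∫ s in Ioi w, U s) := by
    have hres2 : ν (Ioi w) = (ν.restrict (Ioi w₀)) (Ioi w) := by
      rw [Measure.restrict_apply measurableSet_Ioi, Ioi_inter_Ioi,
        sup_eq_left.mpr hw.le]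
    rw [hres2]
    calc (ν.restrict (Ioi w₀)) (Ioi w)
        ≤ ((volume.restrict (Ioi w₀)).withDensity
            (fun s => ENNReal.ofReal (U s))) (Ioi w) :=
          Measure.le_iff.mp hνU _ measurableSet_Ioi
      _ = ∫⁻ s in Ioi w, ENNReal.ofReal (U s) ∂(volume.restrict (Ioi w₀)) :=
          withDensity_apply _ measurableSet_Ioi
      _ = ∫⁻ s in Ioi w, ENNReal.ofReal (U s) ∂volume := by
          rw [Measure.restrict_restrict measurableSet_Ioi, Ioi_inter_Ioi,
            sup_eq_left.mpr hw.le]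
      _ = ENNReal.ofReal (∫ s in Ioi w, U s) := by
          refine (ofReal_integral_eq_lintegral_ofReal intUe ?_).symm
          exact (ae_restrict_iff' measurableSet_Ioi).mpr (ae_of_all _ fun s hs =>
            hU0 s (hIoisub hs))
  have hTnn : 0 ≤ ∫ s in Ioi w, U s := by rw [hTval]; positivity
  have hFsum : F w + (μ {ω | w < W ω}).toReal = 1 := by
    rw [hF w, ← ENNReal.toReal_add (measure_ne_top μ _) (measure_ne_top μ _), hsum]
    exact ENNReal.toReal_one
  have h4 : (μ {ω | w < W ω}).toReal ≤ ∫ s in Ioi w, U s := by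
    rw [hmap]
    calc (ν (Ioi w)).toReal ≤ (ENNReal.ofReal (∫ s in Ioi w, U s)).toReal :=
          ENNReal.toReal_mono ENNReal.ofReal_ne_top htail_le
      _ = ∫ s in Ioi w, U s := ENNReal.toReal_ofReal hTnn
  have htail2 : 1 - F w ≤ c₂ * w ^ (-1/ξ) := by
    have hsp : w ^ (-(1+δ)/ξ) = w ^ (-δ/ξ) * w ^ (-1/ξ) := by
      rw [← Real.rpow_add hw0]; congr 1; ring
    have hle : w ^ (-δ/ξ) ≤ w₀ ^ (-δ/ξ) :=
      Real.rpow_le_rpow_of_nonpos hw₀ hw.le (by rw [neg_div]; linarith)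
    have hw1 : (0:ℝ) < w ^ (-1/ξ) := Real.rpow_pos_of_pos hw0 _
    have hcc : (0:ℝ) ≤ σ ^ (1/ξ) * C / (1+δ) := by positivity
    have : 1 - F w ≤ σ ^ (1/ξ) * w ^ (-1/ξ)
        + (σ ^ (1/ξ) * C / (1+δ)) * w ^ (-(1+δ)/ξ) := by
      rw [← hTval]; linarith [hFsum, h4]
    rw [hsp] at this
    rw [hc₂]
    nlinarith [mul_le_mul_of_nonneg_left (mul_le_mul_of_nonneg_right hle hw1.le) hcc]
  have hFw1 : F w ≤ 1 := by
    rw [hF w]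
    calc (μ {ω | W ω ≤ w}).toReal ≤ (1 : ENNReal).toReal :=
          ENNReal.toReal_mono ENNReal.one_ne_top prob_le_one
      _ = 1 := ENNReal.toReal_one
  have hFmono : F w₀ ≤ F w := by
    rw [hF w₀, hF w]
    exact ENNReal.toReal_mono (measure_ne_top μ _)
      (measure_mono fun ω hω => le_trans hω hw.le)
  have hFw0 : 0 < F w := lt_of_lt_of_le hF0 hFmono
  have hprod : mstar w * (1 - F w) ≤ c₃ * w ^ (1 - 2/ξ) := by
    have h6 : mstar w * (1 - F w) ≤ mstar w * (c₂ * w ^ (-1/ξ)) :=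
      mul_le_mul_of_nonneg_left htail2 hmspos.le
    have hww : w ^ (1 - 1/ξ) * w ^ (-1/ξ) = w ^ (1 - 2/ξ) := by
      rw [← Real.rpow_add hw0]; congr 1; ring
    have h7 : mstar w * (c₂ * w ^ (-1/ξ)) = c₃ * w ^ (1 - 2/ξ) := by
      rw [hmstar w, hc₃, ← hww]
      ring
    linarith
  have hnum : |I - mstar w * F w| ≤ c₁ * w ^ (1 - (1+δ)/ξ) + c₃ * w ^ (1 - 2/ξ) := by
    have hdec : I - mstar w * F w = (I - mstar w) + mstar w * (1 - F w) := by ring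
    rw [hdec]
    calc |(I - mstar w) + mstar w * (1 - F w)|
        ≤ |I - mstar w| + |mstar w * (1 - F w)| := abs_add_le _ _
      _ ≤ c₁ * w ^ (1 - (1+δ)/ξ) + c₃ * w ^ (1 - 2/ξ) := by
          refine add_le_add habs ?_
          rw [abs_of_nonneg (mul_nonneg hmspos.le (by linarith))]
          exact hprod
  have hmw : m w - mstar w = (I - mstar w * F w) / F w := by
    rw [hm w, hm_eq]
    field_simp
  calc |m w - mstar w| = |I - mstar w * F w| / F w := by
        rw [hmw, abs_div, abs_of_pos hFw0]
    _ ≤ (c₁ * w ^ (1 - (1+δ)/ξ) + c₃ * w ^ (1 - 2/ξ)) / F w₀ :=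
        div_le_div₀ (by positivity) hnum hF0 hFmono
    _ ≤ (c₁ + c₃) / F w₀ * (w ^ (1 - (1+δ)/ξ) + w ^ (1 - 2/ξ)) := by
        have hkey2 : c₁ * w ^ (1 - (1+δ)/ξ) + c₃ * w ^ (1 - 2/ξ)
            ≤ (c₁ + c₃) * (w ^ (1 - (1+δ)/ξ) + w ^ (1 - 2/ξ)) := by
          nlinarith [hc₁pos.le, hc₃pos.le, he₁.le, he₂.le]
        have hrhs0 : 0 ≤ (c₁ + c₃) * (w ^ (1 - (1+δ)/ξ) + w ^ (1 - 2/ξ)) :=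
          mul_nonneg (by linarith) (by positivity)
        calc (c₁ * w ^ (1 - (1+δ)/ξ) + c₃ * w ^ (1 - 2/ξ)) / F w₀
            ≤ ((c₁ + c₃) * (w ^ (1 - (1+δ)/ξ) + w ^ (1 - 2/ξ))) / F w₀ :=
              div_le_div₀ hrhs0 hkey2 hF0 le_rfl
          _ = (c₁ + c₃) / F w₀ * (w ^ (1 - (1+δ)/ξ) + w ^ (1 - 2/ξ)) :=
              (div_mul_eq_mul_div _ _ _).symm
end

section
/- For k > 1 define r_k(ξ) = 3(1+k)(1-2ξ) / (2(1+k+2ξ)). Then for all ξ with (1+k)/(1+3k) < ξ < 1/2, it holds that r_k(ξ) > 1/(2ξ) - 1. -/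
/-- For `k > 1` and `r_k(ξ) = 3(1+k)(1-2ξ)/(2(1+k+2ξ))`, for all
`ξ` with `(1+k)/(1+3k) < ξ` it holds that `r_k(ξ) > 1/(2ξ) - 1`. -/
theorem refinement_rate_beats_t_stat_rate (k : ℝ) (hk : 1 < k) (ξ : ℝ)
    (hξl : (1 + k) / (1 + 3 * k) < ξ) (hξu : ξ < 1/2) :
    3 * (1 + k) * (1 - 2 * ξ) / (2 * (1 + k + 2 * ξ)) > 1 / (2 * ξ) - 1 := by
  have hd : (0:ℝ) < 1 + 3 * k := by linarith
  have hξ0 : 0 < ξ := lt_trans (by positivity) hξl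
  have hkey : 1 + k < ξ * (1 + 3 * k) := (div_lt_iff₀ hd).mp hξl
  rw [gt_iff_lt, sub_lt_iff_lt_add]
  rw [div_add' _ _ _ (by positivity : (2 * (1 + k + 2 * ξ)) ≠ 0), div_lt_div_iff₀ (by positivity) (by positivity)]
  nlinarith [mul_pos hξ0 hξ0, sq_nonneg ξ, mul_pos hξ0 (sub_pos.mpr hk)]
end
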